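/- Let f : ℝ^n → ℝ be bounded below and Lipschitz continuous with some constant L' > 0, let σ : [0,∞) → [0,∞) be a forcing function, and let M ∈ ℕ. Let {w^k} ⊂ ℝ^n and {R^k} ⊂ ℝ be sequences such that for every k: f(w^k) ≤ R^k ≤ max_{0 ≤ j ≤ min(k,M)} f(w^{k−j}) and f(w^{k+1}) ≤ R^k − σ(‖w^{k+1} − w^k‖). Then the sequence k ↦ max_{0 ≤ j ≤ min(k,M)} f(w^{k−j}) is nonincreasing, and consequently f(w^k) ≤ f(w^0) for all k, i.e. w^k ∈ L(w^0) = { w : f(w) ≤ f(w^0) } for all k. -/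

import Mathlib

open Filter Finset

/-- `refMax g M k = max_{0 ≤ j ≤ min(k,M)} g (k - j)`, the nonmonotone reference
maximum over the last `min(k,M)+1` values. -/
noncomputable def refMax (g : ℕ → ℝ) (M k : ℕ) : ℝ :=
  (Finset.range (min k M + 1)).sup' Finset.nonempty_range_add_one fun j => g (k - j)

/-- Lemma 1 from Grippo et al., parts (i).
If `f` is bounded below and Lipschitz, `σ` is a forcing function and the
sequence satisfies `f(w^k) ≤ R^k ≤ max_{0≤j≤min(k,M)} f(w^{k-j})` and
`f(w^{k+1}) ≤ R^k - σ(‖w^{k+1} - w^k‖)`, then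
`k ↦ max_{0≤j≤min(k,M)} f(w^{k-j})` is nonincreasing and `f(w^k) ≤ f(w^0)`
for all `k`. -/
theorem stmt_11 {n : ℕ}
    (f : EuclideanSpace ℝ (Fin n) → ℝ)
    (hbdd : BddBelow (Set.range f))
    (L' : ℝ) (hL' : 0 < L')
    (hlip : ∀ u v : EuclideanSpace ℝ (Fin n), |f u - f v| ≤ L' * ‖u - v‖)
    (σ : ℝ → ℝ) (hσnonneg : ∀ t, 0 ≤ t → 0 ≤ σ t)
    (hσforcing : ∀ t : ℕ → ℝ, (∀ k, 0 ≤ t k) →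
      Tendsto (fun k => σ (t k)) atTop (nhds 0) → Tendsto t atTop (nhds 0))
    (M : ℕ)
    (w : ℕ → EuclideanSpace ℝ (Fin n)) (R : ℕ → ℝ)
    (hRlow : ∀ k, f (w k) ≤ R k)
    (hRhigh : ∀ k, R k ≤ refMax (fun k => f (w k)) M k)
    (hdecr : ∀ k, f (w (k + 1)) ≤ R k - σ ‖w (k + 1) - w k‖) :
    Antitone (fun k => refMax (fun k => f (w k)) M k) ∧
      ∀ k, f (w k) ≤ f (w 0) := by
  set g : ℕ → ℝ := fun k => f (w k) with hg
  have hstep : ∀ k, g (k + 1) ≤ refMax g M k := by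
    intro k
    calc g (k + 1) ≤ R k - σ ‖w (k + 1) - w k‖ := hdecr k
      _ ≤ R k := by
          have := hσnonneg ‖w (k + 1) - w k‖ (norm_nonneg _)
          linarith
      _ ≤ refMax g M k := hRhigh k
  have hanti : Antitone (fun k => refMax g M k) := by
    apply antitone_nat_of_succ_le
    intro k
    apply Finset.sup'_le
    intro j hj
    simp only [Finset.mem_range] at hj
    match j with
    | 0 =>
      simpa using hstep k
    | (i + 1) =>
      have hi : i < min k M + 1 := by omega
      have : k + 1 - (i + 1) = k - i := by omega
      rw [this]
      exact Finset.le_sup' (fun j => g (k - j)) (Finset.mem_range.mpr hi)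
  refine ⟨hanti, fun k => ?_⟩
  have h1 : g k ≤ refMax g M k := le_trans (hRlow k) (hRhigh k)
  have h2 : refMax g M k ≤ refMax g M 0 := hanti (Nat.zero_le k)
  have h3 : refMax g M 0 = g 0 := by
    simp [refMax]
  calc f (w k) = g k := rfl
    _ ≤ refMax g M 0 := le_trans h1 h2
    _ = f (w 0) := h3
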